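/- Suppose (u,p,v,π) ∈ ℝ^{2(p+q)} satisfies H₁ = H₂ = D = 0 and both pairs (u,p) and (v,π) are linearly independent (in ℝ^p and ℝ^q respectively). Then the gradients dH₁, dH₂, dD are linearly independent at this point. -/

import Mathlib

open scoped BigOperators

namespace Stmt5

abbrev Phase (np nq : ℕ) := (Fin np → ℝ) × (Fin np → ℝ) × (Fin nq → ℝ) × (Fin nq → ℝ)

variable {np nq : ℕ}

noncomputable def H1 (x : Phase np nq) : ℝ :=
  (1/2) * ((∑ i, (x.2.1 i)^2) - ∑ j, (x.2.2.1 j)^2)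

noncomputable def H2 (x : Phase np nq) : ℝ :=
  (1/2) * ((∑ j, (x.2.2.2 j)^2) - ∑ i, (x.1 i)^2)

noncomputable def Dc (x : Phase np nq) : ℝ :=
  (∑ i, x.1 i * x.2.1 i) - ∑ j, x.2.2.1 j * x.2.2.2 j

noncomputable def cu (i : Fin np) : Phase np nq →L[ℝ] ℝ :=
  (ContinuousLinearMap.proj i).comp (ContinuousLinearMap.fst ℝ _ _)

noncomputable def cp (i : Fin np) : Phase np nq →L[ℝ] ℝ :=
  (ContinuousLinearMap.proj i).comp
    ((ContinuousLinearMap.fst ℝ _ _).comp (ContinuousLinearMap.snd ℝ _ _))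

noncomputable def cv (j : Fin nq) : Phase np nq →L[ℝ] ℝ :=
  (ContinuousLinearMap.proj j).comp
    ((ContinuousLinearMap.fst ℝ _ _).comp
      ((ContinuousLinearMap.snd ℝ _ _).comp (ContinuousLinearMap.snd ℝ _ _)))

noncomputable def cw (j : Fin nq) : Phase np nq →L[ℝ] ℝ :=
  (ContinuousLinearMap.proj j).comp
    ((ContinuousLinearMap.snd ℝ _ _).comp
      ((ContinuousLinearMap.snd ℝ _ _).comp (ContinuousLinearMap.snd ℝ _ _)))

@[simp] lemma cu_apply (i : Fin np) (y : Phase np nq) : cu i y = y.1 i := rfl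
@[simp] lemma cp_apply (i : Fin np) (y : Phase np nq) : cp i y = y.2.1 i := rfl
@[simp] lemma cv_apply (j : Fin nq) (y : Phase np nq) : cv j y = y.2.2.1 j := rfl
@[simp] lemma cw_apply (j : Fin nq) (y : Phase np nq) : cw j y = y.2.2.2 j := rfl

lemma fd_H1 (x h : Phase np nq) :
    fderiv ℝ H1 x h = (∑ i, x.2.1 i * h.2.1 i) - ∑ j, x.2.2.1 j * h.2.2.1 j := by
  have hd : HasFDerivAt (H1 (np := np) (nq := nq))
      ((1/2 : ℝ) • ((∑ i, (((2:ℕ):ℝ) * x.2.1 i ^ 1) • cp i) -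
        ∑ j, (((2:ℕ):ℝ) * x.2.2.1 j ^ 1) • cv j)) x := by
    exact (((HasFDerivAt.fun_sum fun i _ =>
        (hasDerivAt_pow 2 (x.2.1 i)).comp_hasFDerivAt x ((cp (nq := nq) i).hasFDerivAt)).sub
      (HasFDerivAt.fun_sum fun j _ =>
        (hasDerivAt_pow 2 (x.2.2.1 j)).comp_hasFDerivAt x ((cv (np := np) j).hasFDerivAt))).const_mul
      (1/2 : ℝ))
  rw [hd.fderiv]
  simp only [ContinuousLinearMap.smul_apply, ContinuousLinearMap.sub_apply,
    ContinuousLinearMap.sum_apply, cp_apply, cv_apply, pow_one, smul_eq_mul]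
  rw [mul_sub, Finset.mul_sum, Finset.mul_sum]
  congr 1 <;> exact Finset.sum_congr rfl fun _ _ => by push_cast; ring

lemma fd_H2 (x h : Phase np nq) :
    fderiv ℝ H2 x h = (∑ j, x.2.2.2 j * h.2.2.2 j) - ∑ i, x.1 i * h.1 i := by
  have hd : HasFDerivAt (H2 (np := np) (nq := nq))
      ((1/2 : ℝ) • ((∑ j, (((2:ℕ):ℝ) * x.2.2.2 j ^ 1) • cw j) -
        ∑ i, (((2:ℕ):ℝ) * x.1 i ^ 1) • cu i)) x := by
    exact (((HasFDerivAt.fun_sum fun j _ =>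
        (hasDerivAt_pow 2 (x.2.2.2 j)).comp_hasFDerivAt x ((cw (np := np) j).hasFDerivAt)).sub
      (HasFDerivAt.fun_sum fun i _ =>
        (hasDerivAt_pow 2 (x.1 i)).comp_hasFDerivAt x ((cu (nq := nq) i).hasFDerivAt))).const_mul
      (1/2 : ℝ))
  rw [hd.fderiv]
  simp only [ContinuousLinearMap.smul_apply, ContinuousLinearMap.sub_apply,
    ContinuousLinearMap.sum_apply, cw_apply, cu_apply, pow_one, smul_eq_mul]
  rw [mul_sub, Finset.mul_sum, Finset.mul_sum]
  congr 1 <;> exact Finset.sum_congr rfl fun _ _ => by push_cast; ring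

lemma fd_Dc (x h : Phase np nq) :
    fderiv ℝ Dc x h = ((∑ i, (x.1 i * h.2.1 i + x.2.1 i * h.1 i)) -
      ∑ j, (x.2.2.1 j * h.2.2.2 j + x.2.2.2 j * h.2.2.1 j)) := by
  have hd : HasFDerivAt (Dc (np := np) (nq := nq))
      ((∑ i, (x.1 i • cp i + x.2.1 i • cu i)) -
        ∑ j, (x.2.2.1 j • cw j + x.2.2.2 j • cv j)) x := by
    exact ((HasFDerivAt.fun_sum fun i _ =>
        ((cu (nq := nq) i).hasFDerivAt.mul ((cp (nq := nq) i).hasFDerivAt))).sub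
      (HasFDerivAt.fun_sum fun j _ =>
        ((cv (np := np) j).hasFDerivAt.mul ((cw (np := np) j).hasFDerivAt))))
  rw [hd.fderiv]
  simp [ContinuousLinearMap.sum_apply]

/-- If the constraints hold and both pairs `(u,p)`, `(v,π)` are linearly independent,
then the gradients `dH₁, dH₂, dD` are linearly independent. -/
theorem gradients_independent (x : Phase np nq)
    (h1 : H1 x = 0) (h2 : H2 x = 0) (hD : Dc x = 0)
    (hup : ∀ a b : ℝ, a • x.1 + b • x.2.1 = 0 → a = 0 ∧ b = 0)
    (hvπ : ∀ a b : ℝ, a • x.2.2.1 + b • x.2.2.2 = 0 → a = 0 ∧ b = 0) :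
    ∀ α β γ : ℝ,
      α • fderiv ℝ H1 x + β • fderiv ℝ H2 x + γ • fderiv ℝ Dc x = 0 →
      α = 0 ∧ β = 0 ∧ γ = 0 := by
  intro α β γ hc
  have hc' : ∀ h : Phase np nq,
      α * fderiv ℝ H1 x h + β * fderiv ℝ H2 x h + γ * fderiv ℝ Dc x h = 0 := by
    intro h
    have := congrFun (congrArg DFunLike.coe hc) h
    simpa using this
  -- evaluate at (e_i, 0, 0, 0)
  have eq1 : ∀ i : Fin np, (-β) * x.1 i + γ * x.2.1 i = 0 := by
    intro i
    have := hc' (Pi.single i 1, 0, 0, 0)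
    rw [fd_H1, fd_H2, fd_Dc] at this
    simpa [Pi.single_apply, Finset.sum_ite_eq', mul_comm] using this
  -- evaluate at (0, e_i, 0, 0)
  have eq2 : ∀ i : Fin np, γ * x.1 i + α * x.2.1 i = 0 := by
    intro i
    have := hc' (0, Pi.single i 1, 0, 0)
    rw [fd_H1, fd_H2, fd_Dc] at this
    simp [Pi.single_apply, Finset.sum_ite_eq', mul_comm] at this
    linarith
  have h1' := hup (-β) γ (by
    funext i
    have := eq1 i
    simp only [Pi.add_apply, Pi.smul_apply, smul_eq_mul, Pi.zero_apply]
    linarith)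
  have h2' := hup γ α (by
    funext i
    have := eq2 i
    simp only [Pi.add_apply, Pi.smul_apply, smul_eq_mul, Pi.zero_apply]
    linarith)
  exact ⟨h2'.2, by linarith [h1'.1], h1'.2⟩

end Stmt5
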